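/- For any complexity measure ψ and any decision table T, if M_ψ(T) ≥ 1 then ψ^d(T) ≤ M_ψ(T)·log₂(N(T)), and if M_ψ(T) = 0 then ψ^d(T) = 0; moreover the lower bound ψ^d(T) ≥ M_ψ(T) always holds. -/

import Mathlib

/- Decision tables over E_{k+2} = {0, ..., k+1}, following Ostonov & Moshkov,
"Deterministic and Strongly Nondeterministic Decision Trees for Decision Tables
from Closed Classes".  Columns are labeled with attributes (natural numbers),
rows are functions supported on the attribute set, decisions are Booleans. -/

namespace ClosedClasses

/-- A decision table with 0-1-decisions over `E_{k+2}`. Rows are pairwise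
different (they form a `Finset`) and vanish outside the attribute set. -/
structure Table (k : ℕ) where
  attrs : Finset ℕ
  rows : Finset (ℕ → Fin (k + 2))
  dec : (ℕ → Fin (k + 2)) → Bool
  supp : ∀ r ∈ rows, ∀ a ∉ attrs, r a = 0

namespace Table

variable {k : ℕ}

/-- Number of columns. -/
def W (T : Table k) : ℕ := T.attrs.card

/-- Number of rows. -/
def N (T : Table k) : ℕ := T.rows.card

/-- All rows carry the same decision. -/
def ConstDec (T : Table k) : Prop :=
  ∀ r ∈ T.rows, ∀ r' ∈ T.rows, T.dec r = T.dec r'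

/-- `D` separates the row `r` from all other rows of `T`. -/
def Separates (T : Table k) (D : Finset ℕ) (r : ℕ → Fin (k + 2)) : Prop :=
  D ⊆ T.attrs ∧ ∀ r' ∈ T.rows, r' ≠ r → ∃ a ∈ D, r a ≠ r' a

/-- `S(T, r)`: minimum cardinality of a separating set for row `r`. -/
noncomputable def Srow (T : Table k) (r : ℕ → Fin (k + 2)) : ℕ :=
  sInf {m | ∃ D : Finset ℕ, T.Separates D r ∧ D.card = m}

/-- `S(T)`: maximum over rows of `S(T, r)`. -/
noncomputable def S (T : Table k) : ℕ :=
  sSup {m | ∃ r ∈ T.rows, T.Srow r = m}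

/-- A test of `T`: a set of columns distinguishing rows with different decisions. -/
def IsTest (T : Table k) (D : Finset ℕ) : Prop :=
  D ⊆ T.attrs ∧
    ∀ r ∈ T.rows, ∀ r' ∈ T.rows, T.dec r ≠ T.dec r' → ∃ a ∈ D, r a ≠ r' a

/-- `Θ(T)`: minimum cardinality of a test of `T`. -/
noncomputable def theta (T : Table k) : ℕ :=
  sInf {m | ∃ D : Finset ℕ, T.IsTest D ∧ D.card = m}

end Table

/-- `(k+2)`-decision trees: leaves carry decisions, internal nodes query an
attribute and branch on its `k+2` possible values. -/
inductive DT (k : ℕ) where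
  | leaf : Bool → DT k
  | node : ℕ → (Fin (k + 2) → DT k) → DT k

namespace DT

variable {k : ℕ}

/-- Deterministic evaluation of a tree on a row. -/
def eval : DT k → (ℕ → Fin (k + 2)) → Bool
  | leaf b, _ => b
  | node a ch, r => eval (ch (r a)) r

/-- Depth: maximum number of queries along a complete path. -/
def depth : DT k → ℕ
  | leaf _ => 0
  | node _ ch => 1 + Finset.univ.sup fun i => (ch i).depth

/-- The set `P(Γ)` of attributes queried in the tree. -/
def attrSet : DT k → Finset ℕ
  | leaf _ => ∅
  | node a ch => insert a (Finset.univ.biUnion fun i => (ch i).attrSet)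

/-- `ψ`-cost: maximum over complete paths of `ψ` of the word of queried
attributes (the accumulator `w` holds attributes already queried). -/
def cost (ψ : List ℕ → ℕ) : DT k → List ℕ → ℕ
  | leaf _, w => ψ w
  | node a ch, w => Finset.univ.sup fun i => cost ψ (ch i) (a :: w)

end DT

/-- `Γ` is a deterministic decision tree for the table `T`. -/
def IsDT {k : ℕ} (T : Table k) (Γ : DT k) : Prop :=
  Γ.attrSet ⊆ T.attrs ∧ ∀ r ∈ T.rows, Γ.eval r = T.dec r

/-- `h^d(T)`: minimum depth of a deterministic decision tree for `T`. -/
noncomputable def hd {k : ℕ} (T : Table k) : ℕ :=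
  sInf {m | ∃ Γ : DT k, IsDT T Γ ∧ Γ.depth = m}

/-- `ψ^d(T)`: minimum `ψ`-complexity of a deterministic decision tree for `T`. -/
noncomputable def psid {k : ℕ} (ψ : List ℕ → ℕ) (T : Table k) : ℕ :=
  sInf {m | ∃ Γ : DT k, IsDT T Γ ∧ Γ.cost ψ [] = m}

/-- A row satisfies a rule (a conjunction of equations `attribute = value`). -/
def RuleSat {k : ℕ} (rule : List (ℕ × Fin (k + 2))) (r : ℕ → Fin (k + 2)) : Prop :=
  ∀ p ∈ rule, r p.1 = p.2

/-- A strongly nondeterministic decision tree for `T`, represented by the set of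
words of its complete paths (rules): every rule uses attributes of `T`, each
row with decision 1 satisfies some rule, and each rule is consistent only with
rows carrying decision 1. -/
def IsSNDT {k : ℕ} (T : Table k) (R : Finset (List (ℕ × Fin (k + 2)))) : Prop :=
  (∀ rule ∈ R, ∀ p ∈ rule, p.1 ∈ T.attrs) ∧
  (∀ r ∈ T.rows, T.dec r = true → ∃ rule ∈ R, RuleSat rule r) ∧
  (∀ rule ∈ R, ∀ r ∈ T.rows, RuleSat rule r → T.dec r = true)

/-- `ψ^s(T)`: minimum `ψ`-complexity of a strongly nondeterministic decision
tree for `T`. -/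
noncomputable def psis {k : ℕ} (ψ : List ℕ → ℕ) (T : Table k) : ℕ :=
  sInf {m | ∃ R, IsSNDT T R ∧ R.sup (fun rule => ψ (rule.map Prod.fst)) = m}

/-- `h^s(T)`: minimum depth of a strongly nondeterministic decision tree. -/
noncomputable def hs {k : ℕ} (T : Table k) : ℕ :=
  sInf {m | ∃ R, IsSNDT T R ∧ R.sup (fun rule => (rule.map Prod.fst).length) = m}

/-- A complexity measure on finite words over the alphabet `{f_i : i ∈ ω}`. -/
structure CMeasure where
  ψ : List ℕ → ℕ
  pos : ∀ w, ψ w = 0 ↔ w = []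
  perm : ∀ w w' : List ℕ, w.Perm w' → ψ w = ψ w'
  mono : ∀ w₁ w₂ : List ℕ, ψ w₁ ≤ ψ (w₁ ++ w₂)
  subadd : ∀ w₁ w₂ : List ℕ, ψ (w₁ ++ w₂) ≤ ψ w₁ + ψ w₂

/-- Bounded complexity measure: `ψ(α) ≥ |α|`. -/
def CMeasure.Bounded (ψ : CMeasure) : Prop := ∀ w : List ℕ, w.length ≤ ψ.ψ w

/-- Extension of a complexity measure to finite sets of attributes. -/
def CMeasure.setCost (ψ : CMeasure) (D : Finset ℕ) : ℕ := ψ.ψ (D.sort (· ≤ ·))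

namespace Table

variable {k : ℕ}

/-- `S_ψ(T, r)`: minimum `ψ`-complexity of a set separating `r` from the other rows. -/
noncomputable def Spsirow (ψ : CMeasure) (T : Table k) (r : ℕ → Fin (k + 2)) : ℕ :=
  sInf {m | ∃ D : Finset ℕ, T.Separates D r ∧ ψ.setCost D = m}

/-- `S_ψ(T)`: maximum over rows of `S_ψ(T, r)`. -/
noncomputable def Spsi (ψ : CMeasure) (T : Table k) : ℕ :=
  sSup {m | ∃ r ∈ T.rows, Spsirow ψ T r = m}

/-- `Θ_ψ(T)`: minimum `ψ`-complexity of a test of `T`. -/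
noncomputable def thetapsi (ψ : CMeasure) (T : Table k) : ℕ :=
  sInf {m | ∃ D : Finset ℕ, T.IsTest D ∧ ψ.setCost D = m}

/-- `W_ψ(T) = ψ(P(T))`. -/
def Wpsi (ψ : CMeasure) (T : Table k) : ℕ := ψ.setCost T.attrs

/-- `V_ψ(T) = max{ψ(f_i) : f_i ∈ P(T)}`. -/
noncomputable def Vpsi (ψ : CMeasure) (T : Table k) : ℕ :=
  sSup {m | ∃ a ∈ T.attrs, ψ.ψ [a] = m}

end Table

/-- Restriction of a row to a set of attributes. -/
def restrict {k : ℕ} (A : Finset ℕ) (r : ℕ → Fin (k + 2)) : ℕ → Fin (k + 2) :=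
  fun a => if a ∈ A then r a else 0

/-- `T'` belongs to the closure `[T]` of `T` under removal of columns and
changing of decisions: `T'` keeps a subset of the columns of `T`, its rows are
the restrictions of the rows of `T`, and its decisions are arbitrary. -/
def InClosure {k : ℕ} (T' T : Table k) : Prop :=
  T'.attrs ⊆ T.attrs ∧ (T'.rows : Set (ℕ → Fin (k + 2))) = restrict T'.attrs '' (T.rows : Set (ℕ → Fin (k + 2)))

/-- A nonempty class of decision tables closed under removal of columns and
changing of decisions. -/
def ClosedClass {k : ℕ} (A : Set (Table k)) : Prop :=
  A.Nonempty ∧ ∀ T ∈ A, ∀ T' : Table k, InClosure T' T → T' ∈ A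

/-- `Ŝ_ψ(T) = max{S_ψ(T') : T' ∈ [T]}`. -/
noncomputable def Shatpsi {k : ℕ} (ψ : CMeasure) (T : Table k) : ℕ :=
  sSup {m | ∃ T' : Table k, InClosure T' T ∧ T'.Spsi ψ = m}

/-- `Ŝ(T) = max{S(T') : T' ∈ [T]}`. -/
noncomputable def Shat {k : ℕ} (T : Table k) : ℕ :=
  sSup {m | ∃ T' : Table k, InClosure T' T ∧ T'.S = m}

/-- Fixing the attributes of the word `p` to the listed values restricts `T`
to a subtable (possibly empty) in which all rows carry the same decision. -/
def FixConst {k : ℕ} (T : Table k) (p : List (ℕ × Fin (k + 2))) : Prop :=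
  ∀ r ∈ T.rows, ∀ r' ∈ T.rows, RuleSat p r → RuleSat p r' → T.dec r = T.dec r'

/-- `M_ψ(T, δ)`: minimum `ψ`-value of a word of attributes of `T` whose
fixation to the values of `δ` yields a subtable with constant decisions. -/
noncomputable def Mpsirow {k : ℕ} (ψ : CMeasure) (T : Table k)
    (δ : ℕ → Fin (k + 2)) : ℕ :=
  sInf {m | ∃ p : List (ℕ × Fin (k + 2)),
    (∀ q ∈ p, q.1 ∈ T.attrs ∧ q.2 = δ q.1) ∧ FixConst T p ∧
      ψ.ψ (p.map Prod.fst) = m}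

/-- `M_ψ(T)`: maximum of `M_ψ(T, δ)` over all tuples `δ ∈ E_{k+2}^{W(T)}`. -/
noncomputable def Mpsi {k : ℕ} (ψ : CMeasure) (T : Table k) : ℕ :=
  sSup {m | ∃ δ : ℕ → Fin (k + 2), (∀ a ∉ T.attrs, δ a = 0) ∧ Mpsirow ψ T δ = m}

/-- A critical table: for every column there are two rows differing exactly
in this column. -/
def Critical {k : ℕ} (T : Table k) : Prop :=
  T.rows.Nonempty ∧ ∀ a ∈ T.attrs, ∃ r ∈ T.rows, ∃ r' ∈ T.rows,
    r a ≠ r' a ∧ ∀ b : ℕ, b ≠ a → r b = r' b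

/-- `H_D(n)`: the largest element of `D` not exceeding `n` (0 if none). -/
noncomputable def HD (D : Set ℕ) (n : ℕ) : ℕ := sSup (D ∩ Set.Iic n)

end ClosedClasses

open ClosedClasses

section AuxProofs

namespace ClosedClasses

variable {k : ℕ}

lemma psi_nil (ψ : CMeasure) : ψ.ψ [] = 0 := (ψ.pos []).2 rfl

lemma psi_comm (ψ : CMeasure) (w₁ w₂ : List ℕ) : ψ.ψ (w₁ ++ w₂) = ψ.ψ (w₂ ++ w₁) :=
  ψ.perm _ _ List.perm_append_comm

lemma ruleSat_cons {q : ℕ × Fin (k+2)} {rest : List (ℕ × Fin (k+2))} {r : ℕ → Fin (k+2)} :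
    RuleSat (q :: rest) r ↔ r q.1 = q.2 ∧ RuleSat rest r := by
  simp [RuleSat]

/-- The full word fixing all attributes of `T` to the values of `δ`. -/
noncomputable def fullP (T : Table k) (δ : ℕ → Fin (k+2)) : List (ℕ × Fin (k+2)) :=
  (T.attrs.sort (· ≤ ·)).map fun a => (a, δ a)

lemma fullP_mem (T : Table k) (δ : ℕ → Fin (k+2)) :
    ∀ q ∈ fullP T δ, q.1 ∈ T.attrs ∧ q.2 = δ q.1 := by
  intro q hq
  simp only [fullP, List.mem_map, Finset.mem_sort] at hq
  obtain ⟨a, ha, rfl⟩ := hq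
  exact ⟨ha, rfl⟩

lemma fullP_fix (T : Table k) (δ : ℕ → Fin (k+2)) : FixConst T (fullP T δ) := by
  intro r hr r' hr' h h'
  have : r = r' := by
    funext a
    by_cases ha : a ∈ T.attrs
    · have hm : (a, δ a) ∈ fullP T δ := by
        simp only [fullP, List.mem_map, Finset.mem_sort]
        exact ⟨a, ha, rfl⟩
      rw [h _ hm, h' _ hm]
    · rw [T.supp r hr a ha, T.supp r' hr' a ha]
  rw [this]

lemma Mpsirow_set_nonempty (ψ : CMeasure) (T : Table k) (δ : ℕ → Fin (k+2)) :
    {m | ∃ p : List (ℕ × Fin (k + 2)),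
      (∀ q ∈ p, q.1 ∈ T.attrs ∧ q.2 = δ q.1) ∧ FixConst T p ∧
        ψ.ψ (p.map Prod.fst) = m}.Nonempty :=
  ⟨_, fullP T δ, fullP_mem T δ, fullP_fix T δ, rfl⟩

lemma Mpsirow_le_setCost (ψ : CMeasure) (T : Table k) (δ : ℕ → Fin (k+2)) :
    Mpsirow ψ T δ ≤ ψ.setCost T.attrs := by
  have hmap : (fullP T δ).map Prod.fst = T.attrs.sort (· ≤ ·) := by
    simp only [fullP, List.map_map]
    exact List.map_id _
  refine Nat.sInf_le ⟨fullP T δ, fullP_mem T δ, fullP_fix T δ, ?_⟩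
  rw [hmap]; rfl

lemma Mpsirow_le_of_mem (ψ : CMeasure) (T : Table k) (δ : ℕ → Fin (k+2))
    {p : List (ℕ × Fin (k + 2))} (h1 : ∀ q ∈ p, q.1 ∈ T.attrs ∧ q.2 = δ q.1)
    (h2 : FixConst T p) : Mpsirow ψ T δ ≤ ψ.ψ (p.map Prod.fst) :=
  Nat.sInf_le ⟨p, h1, h2, rfl⟩

lemma Mpsi_bddAbove (ψ : CMeasure) (T : Table k) :
    BddAbove {m | ∃ δ : ℕ → Fin (k + 2), (∀ a ∉ T.attrs, δ a = 0) ∧ Mpsirow ψ T δ = m} := by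
  refine ⟨ψ.setCost T.attrs, ?_⟩
  rintro m ⟨δ, _, h⟩
  exact h ▸ Mpsirow_le_setCost ψ T δ

lemma Mpsirow_le_Mpsi (ψ : CMeasure) (T : Table k) (δ : ℕ → Fin (k+2))
    (hδ : ∀ a ∉ T.attrs, δ a = 0) : Mpsirow ψ T δ ≤ Mpsi ψ T :=
  le_csSup (Mpsi_bddAbove ψ T) ⟨δ, hδ, rfl⟩

/-- Following the branch of `δ` through a tree yields a word whose fixation
pins down the tree's output, with `ψ`-value at most the tree's cost. -/
lemma follow (ψ : CMeasure) (δ : ℕ → Fin (k+2)) (Γ : DT k) :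
    ∃ p : List (ℕ × Fin (k + 2)),
      (∀ q ∈ p, q.1 ∈ Γ.attrSet ∧ q.2 = δ q.1) ∧
      (∀ r, RuleSat p r → Γ.eval r = Γ.eval δ) ∧
      (∀ w, ψ.ψ ((p.map Prod.fst).reverse ++ w) ≤ Γ.cost ψ.ψ w) := by
  induction Γ with
  | leaf b => exact ⟨[], by simp, fun r _ => rfl, fun w => le_of_eq rfl⟩
  | node a ch ih =>
    obtain ⟨p, h1, h2, h3⟩ := ih (δ a)
    refine ⟨(a, δ a) :: p, ?_, ?_, ?_⟩
    · rintro q hq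
      rcases List.mem_cons.mp hq with rfl | hq
      · exact ⟨by simp [DT.attrSet], rfl⟩
      · obtain ⟨hq1, hq2⟩ := h1 q hq
        refine ⟨?_, hq2⟩
        simp only [DT.attrSet, Finset.mem_insert, Finset.mem_biUnion]
        exact Or.inr ⟨δ a, Finset.mem_univ _, hq1⟩
    · intro r hr
      obtain ⟨hra, hrest⟩ := ruleSat_cons.mp hr
      show DT.eval (ch (r a)) r = DT.eval (ch (δ a)) δ
      rw [hra]
      exact h2 r hrest
    · intro w
      have : ψ.ψ (((((a, δ a) :: p).map Prod.fst).reverse) ++ w)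
          = ψ.ψ ((p.map Prod.fst).reverse ++ (a :: w)) := by
        congr 1
        simp
      rw [this]
      calc ψ.ψ ((p.map Prod.fst).reverse ++ (a :: w)) ≤ (ch (δ a)).cost ψ.ψ (a :: w) :=
            h3 (a :: w)
        _ ≤ (DT.node a ch).cost ψ.ψ w :=
            Finset.le_sup (f := fun i => (ch i).cost ψ.ψ (a :: w)) (Finset.mem_univ (δ a))

/-- A most frequent value in column `a` among the rows of `Q`. -/
noncomputable def maj (Q : Finset (ℕ → Fin (k+2))) (a : ℕ) : Fin (k+2) :=
  (Finset.exists_max_image Finset.univ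
    (fun σ => (Q.filter fun r => r a = σ).card) ⟨0, Finset.mem_univ 0⟩).choose

lemma maj_spec (Q : Finset (ℕ → Fin (k+2))) (a : ℕ) (σ : Fin (k+2)) :
    (Q.filter fun r => r a = σ).card ≤ (Q.filter fun r => r a = maj Q a).card :=
  (Finset.exists_max_image Finset.univ
    (fun σ => (Q.filter fun r => r a = σ).card)
      ⟨0, Finset.mem_univ 0⟩).choose_spec.2 σ (Finset.mem_univ σ)

lemma filter_card_le_half (Q : Finset (ℕ → Fin (k+2))) (a : ℕ) {σ : Fin (k+2)}
    (h : σ ≠ maj Q a) : 2 * (Q.filter fun r => r a = σ).card ≤ Q.card := by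
  classical
  have hdisj : Disjoint (Q.filter fun r => r a = σ) (Q.filter fun r => r a = maj Q a) := by
    rw [Finset.disjoint_left]
    intro r hr hr'
    exact h ((Finset.mem_filter.mp hr).2 ▸ (Finset.mem_filter.mp hr').2 ▸ rfl)
  have hsub : (Q.filter fun r => r a = σ) ∪ (Q.filter fun r => r a = maj Q a) ⊆ Q :=
    Finset.union_subset (Finset.filter_subset _ _) (Finset.filter_subset _ _)
  have h1 := Finset.card_le_card hsub
  rw [Finset.card_union_of_disjoint hdisj] at h1
  have h2 := maj_spec Q a σ
  linarith

/-- A constant subtable is computed by a single leaf. -/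
lemma leafTree (ψ : CMeasure) (T : Table k) (Q' : Finset (ℕ → Fin (k+2)))
    (hconst : ∀ r ∈ Q', ∀ r' ∈ Q', T.dec r = T.dec r') :
    ∃ Γ : DT k, Γ.attrSet ⊆ T.attrs ∧ (∀ r ∈ Q', Γ.eval r = T.dec r) ∧
      ∀ w, Γ.cost ψ.ψ w = ψ.ψ w := by
  refine ⟨DT.leaf (if h : Q'.Nonempty then T.dec h.choose else true), ?_, ?_, fun w => rfl⟩
  · simp [DT.attrSet]
  · intro r hr
    show (if h : Q'.Nonempty then T.dec h.choose else true) = T.dec r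
    have hne : Q'.Nonempty := ⟨r, hr⟩
    rw [dif_pos hne]
    exact hconst _ hne.choose_spec r hr

lemma psi_dev (ψ : CMeasure) (a : ℕ) (w R : List ℕ) :
    ψ.ψ (a :: w) ≤ ψ.ψ ((R ++ [a]) ++ w) := by
  have h1 : ψ.ψ (a :: w) = ψ.ψ (w ++ [a]) := ψ.perm _ _ (List.perm_append_comm (l₁ := [a]))
  have h2 : ψ.ψ (w ++ [a]) ≤ ψ.ψ ((w ++ [a]) ++ R) := ψ.mono _ _
  have h3 : ψ.ψ ((w ++ [a]) ++ R) = ψ.ψ ((R ++ [a]) ++ w) := by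
    refine ψ.perm _ _ ?_
    rw [List.append_assoc R]
    exact List.perm_append_comm.trans (List.Perm.append_left R List.perm_append_comm)
  rw [h1, ← h3]
  exact h2

lemma psi_rev_append_le (ψ : CMeasure) (u w : List ℕ) :
    ψ.ψ (u.reverse ++ w) ≤ ψ.ψ w + ψ.ψ u := by
  have h1 : ψ.ψ (u.reverse ++ w) = ψ.ψ (w ++ u.reverse) := psi_comm ψ _ _
  have h2 : ψ.ψ (w ++ u.reverse) ≤ ψ.ψ w + ψ.ψ u.reverse := ψ.subadd _ _
  have h3 : ψ.ψ u.reverse = ψ.ψ u := ψ.perm _ _ (List.reverse_perm u)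
  rw [h1, ← h3]
  exact h2

/-- Greedy construction of a deterministic decision tree of `ψ`-cost at most
`M_ψ(T) · log₂ |Q|` handling any subset `Q` of the rows of `T`. -/
lemma buildTree (ψ : CMeasure) (T : Table k) :
    ∀ n (Q : Finset (ℕ → Fin (k+2))), Q ⊆ T.rows → Q.card ≤ n →
      ∃ Γ : DT k, Γ.attrSet ⊆ T.attrs ∧ (∀ r ∈ Q, Γ.eval r = T.dec r) ∧
        ∀ w, Γ.cost ψ.ψ w ≤ ψ.ψ w + Mpsi ψ T * Nat.log 2 Q.card := by
  intro n
  induction n with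
  | zero =>
    intro Q hQ hcard
    obtain ⟨Γ, hA, hE, hC⟩ := leafTree ψ T Q (by
      intro r hr r' hr'
      rw [Finset.card_eq_zero.mp (Nat.le_zero.mp hcard)] at hr
      exact absurd hr (Finset.notMem_empty r))
    exact ⟨Γ, hA, hE, fun w => (hC w).le.trans (Nat.le_add_right _ _)⟩
  | succ n ih =>
    intro Q hQ hcard
    by_cases hsmall : Q.card ≤ 1
    · obtain ⟨Γ, hA, hE, hC⟩ := leafTree ψ T Q (by
        intro r hr r' hr'
        rw [Finset.card_le_one.mp hsmall r hr r' hr'])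
      exact ⟨Γ, hA, hE, fun w => (hC w).le.trans (Nat.le_add_right _ _)⟩
    push_neg at hsmall
    set M := Mpsi ψ T with hM
    set L := Nat.log 2 Q.card with hL
    have hL1 : 1 ≤ L := Nat.log_pos (by norm_num) hsmall
    set δ : ℕ → Fin (k+2) := fun a => if a ∈ T.attrs then maj Q a else 0 with hδ
    have hδsupp : ∀ a ∉ T.attrs, δ a = 0 := fun a ha => by simp [hδ, ha]
    obtain ⟨p, hp1, hp2, hp3⟩ := Nat.sInf_mem (Mpsirow_set_nonempty ψ T δ)
    have hpM : ψ.ψ (p.map Prod.fst) ≤ M := hp3.le.trans (Mpsirow_le_Mpsi ψ T δ hδsupp)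
    have houter : ∀ Q' : Finset (ℕ → Fin (k+2)), Q' ⊆ T.rows → 2 * Q'.card ≤ Q.card →
        ∃ Γ : DT k, Γ.attrSet ⊆ T.attrs ∧ (∀ r ∈ Q', Γ.eval r = T.dec r) ∧
          ∀ w, Γ.cost ψ.ψ w ≤ ψ.ψ w + M * (L - 1) := by
      intro Q' hQ' hhalf
      obtain ⟨Γ, hA, hE, hC⟩ := ih Q' hQ' (by omega)
      refine ⟨Γ, hA, hE, fun w => (hC w).trans ?_⟩
      have hlog : Nat.log 2 Q'.card ≤ L - 1 := by
        have h1 : Q'.card ≤ Q.card / 2 := (Nat.le_div_iff_mul_le (by norm_num)).mpr (by omega)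
        calc Nat.log 2 Q'.card ≤ Nat.log 2 (Q.card / 2) := Nat.log_mono_right h1
          _ = L - 1 := Nat.log_div_base 2 Q.card
      exact Nat.add_le_add_left (Nat.mul_le_mul_left _ hlog) _
    have inner : ∀ p' : List (ℕ × Fin (k+2)),
        (∀ q ∈ p', q.1 ∈ T.attrs ∧ q.2 = δ q.1) →
        ∀ Q' : Finset (ℕ → Fin (k+2)), Q' ⊆ Q →
        (∀ r ∈ Q', ∀ r' ∈ Q', RuleSat p' r → RuleSat p' r' → T.dec r = T.dec r') →
        ∃ Γ : DT k, Γ.attrSet ⊆ T.attrs ∧ (∀ r ∈ Q', Γ.eval r = T.dec r) ∧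
          ∀ w, Γ.cost ψ.ψ w ≤ ψ.ψ ((p'.map Prod.fst).reverse ++ w) + M * (L - 1) := by
      intro p'
      induction p' with
      | nil =>
        intro _ Q' hQ'Q hconst
        obtain ⟨Γ, hA, hE, hC⟩ := leafTree ψ T Q'
          (fun r hr r' hr' => hconst r hr r' hr' (by simp [RuleSat]) (by simp [RuleSat]))
        exact ⟨Γ, hA, hE, fun w => by rw [hC w]; exact Nat.le_add_right _ _⟩
      | cons q rest ihp =>
        intro hmem Q' hQ'Q hconst
        obtain ⟨ha_attrs, hqv⟩ := hmem q List.mem_cons_self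
        have hmaj : δ q.1 = maj Q q.1 := by simp [hδ, ha_attrs]
        obtain ⟨Γeq, heqA, heqE, heqC⟩ := ihp (fun x hx => hmem x (List.mem_cons_of_mem _ hx))
          (Q'.filter fun r => r q.1 = δ q.1) ((Finset.filter_subset _ _).trans hQ'Q)
          (by
            intro r hr r' hr' hs hs'
            have hr1 := Finset.mem_filter.mp hr
            have hr2 := Finset.mem_filter.mp hr'
            exact hconst r hr1.1 r' hr2.1
              (ruleSat_cons.mpr ⟨hr1.2.trans hqv.symm, hs⟩)
              (ruleSat_cons.mpr ⟨hr2.2.trans hqv.symm, hs'⟩))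
        have hdev : ∀ σ : Fin (k+2), σ ≠ δ q.1 →
            ∃ Γ : DT k, Γ.attrSet ⊆ T.attrs ∧
              (∀ r ∈ Q'.filter (fun r => r q.1 = σ), Γ.eval r = T.dec r) ∧
              ∀ w, Γ.cost ψ.ψ w ≤ ψ.ψ w + M * (L - 1) := by
          intro σ hσ
          refine houter _ ((Finset.filter_subset _ _).trans (hQ'Q.trans hQ)) ?_
          calc 2 * (Q'.filter fun r => r q.1 = σ).card
              ≤ 2 * (Q.filter fun r => r q.1 = σ).card := by
                exact Nat.mul_le_mul_left 2
                  (Finset.card_le_card (Finset.filter_subset_filter (fun r => r q.1 = σ) hQ'Q))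
            _ ≤ Q.card := filter_card_le_half Q q.1 (hmaj ▸ hσ)
        refine ⟨DT.node q.1 (fun σ => if h : σ = δ q.1 then Γeq else (hdev σ h).choose),
          ?_, ?_, ?_⟩
        · intro x hx
          simp only [DT.attrSet, Finset.mem_insert, Finset.mem_biUnion] at hx
          rcases hx with rfl | ⟨i, _, hi⟩
          · exact ha_attrs
          · by_cases h : i = δ q.1
            · rw [dif_pos h] at hi; exact heqA hi
            · rw [dif_neg h] at hi; exact (hdev i h).choose_spec.1 hi
        · intro r hr
          show DT.eval (if h : r q.1 = δ q.1 then Γeq else (hdev _ h).choose) r = T.dec r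
          by_cases h : r q.1 = δ q.1
          · rw [dif_pos h]
            exact heqE r (Finset.mem_filter.mpr ⟨hr, h⟩)
          · rw [dif_neg h]
            exact (hdev _ h).choose_spec.2.1 r (Finset.mem_filter.mpr ⟨hr, rfl⟩)
        · intro w
          show (Finset.univ.sup fun i =>
              DT.cost ψ.ψ (if h : i = δ q.1 then Γeq else (hdev i h).choose) (q.1 :: w)) ≤ _
          refine Finset.sup_le fun i _ => ?_
          by_cases h : i = δ q.1
          · rw [dif_pos h]
            refine (heqC (q.1 :: w)).trans (Nat.add_le_add_right (le_of_eq (congrArg ψ.ψ ?_)) _)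
            simp
          · rw [dif_neg h]
            refine ((hdev i h).choose_spec.2.2 (q.1 :: w)).trans
              (Nat.add_le_add_right ?_ _)
            have : ((q :: rest).map Prod.fst).reverse = (rest.map Prod.fst).reverse ++ [q.1] := by
              simp
            rw [this]
            exact psi_dev ψ q.1 w _
    obtain ⟨Γ, hA, hE, hC⟩ := inner p hp1 Q (Finset.Subset.refl Q)
      (fun r hr r' hr' hs hs' => hp2 r (hQ hr) r' (hQ hr') hs hs')
    refine ⟨Γ, hA, hE, fun w => (hC w).trans ?_⟩
    calc ψ.ψ ((p.map Prod.fst).reverse ++ w) + M * (L - 1)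
        ≤ (ψ.ψ w + ψ.ψ (p.map Prod.fst)) + M * (L - 1) :=
          Nat.add_le_add_right (psi_rev_append_le ψ _ w) _
      _ ≤ (ψ.ψ w + M) + M * (L - 1) := Nat.add_le_add_right (Nat.add_le_add_left hpM _) _
      _ = ψ.ψ w + M * L := by
          have h2 : M * L = M * (L - 1) + M := by
            conv_lhs => rw [show L = L - 1 + 1 from by omega]
            rw [Nat.mul_succ]
          rw [h2]
          ring

end ClosedClasses

end AuxProofs

/-- Lemmas 3 and 4: `ψ^d(T) = 0` if `M_ψ(T) = 0`,
`ψ^d(T) ≤ M_ψ(T)·log₂ N(T)` if `M_ψ(T) ≥ 1`, and always `ψ^d(T) ≥ M_ψ(T)`. -/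
theorem psid_bounds_via_Mpsi (k : ℕ) (ψ : CMeasure) (T : Table k) :
    (Mpsi ψ T = 0 → psid ψ.ψ T = 0) ∧
    (1 ≤ Mpsi ψ T →
      (psid ψ.ψ T : ℝ) ≤ (Mpsi ψ T : ℝ) * Real.logb 2 (T.N : ℝ)) ∧
    Mpsi ψ T ≤ psid ψ.ψ T := by
  obtain ⟨Γ₀, hA₀, hE₀, hC₀⟩ := buildTree ψ T T.rows.card T.rows (Finset.Subset.refl _) le_rfl
  have hpsid_ne : {m | ∃ Γ : DT k, IsDT T Γ ∧ Γ.cost ψ.ψ [] = m}.Nonempty :=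
    ⟨_, Γ₀, ⟨hA₀, hE₀⟩, rfl⟩
  have hMne : {m | ∃ δ : ℕ → Fin (k + 2), (∀ a ∉ T.attrs, δ a = 0) ∧
      Mpsirow ψ T δ = m}.Nonempty := ⟨_, (fun _ => 0), fun _ _ => rfl, rfl⟩
  have lower : Mpsi ψ T ≤ psid ψ.ψ T := by
    obtain ⟨Γ, hΓ, hcost⟩ := Nat.sInf_mem hpsid_ne
    refine csSup_le hMne ?_
    rintro m ⟨δ, hδ, rfl⟩
    obtain ⟨p, h1, h2, h3⟩ := follow ψ δ Γ
    have hfix : FixConst T p := by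
      intro r hr r' hr' hs hs'
      rw [← hΓ.2 r hr, ← hΓ.2 r' hr', h2 r hs, h2 r' hs']
    have hle : Mpsirow ψ T δ ≤ ψ.ψ (p.map Prod.fst) :=
      Nat.sInf_le ⟨p, fun q hq => ⟨hΓ.1 (h1 q hq).1, (h1 q hq).2⟩, hfix, rfl⟩
    refine hle.trans ?_
    have h3' := h3 []
    rw [List.append_nil] at h3'
    calc ψ.ψ (p.map Prod.fst) = ψ.ψ (p.map Prod.fst).reverse :=
          ψ.perm _ _ (List.reverse_perm _).symm
      _ ≤ Γ.cost ψ.ψ [] := h3'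
      _ = psid ψ.ψ T := hcost
  refine ⟨?_, ?_, lower⟩
  · intro h0
    have hrow : Mpsirow ψ T (fun _ => 0) = 0 :=
      Nat.le_zero.mp (h0 ▸ Mpsirow_le_Mpsi ψ T _ (fun _ _ => rfl))
    obtain ⟨p, hp1, hp2, hp3⟩ := Nat.sInf_mem (Mpsirow_set_nonempty ψ T (fun _ => 0))
    have hp3' : ψ.ψ (p.map Prod.fst) = 0 := by rw [hp3]; exact hrow
    have hpnil : p = [] := List.eq_nil_of_map_eq_nil ((ψ.pos _).1 hp3')
    subst hpnil
    have hconst : ∀ r ∈ T.rows, ∀ r' ∈ T.rows, T.dec r = T.dec r' := fun r hr r' hr' =>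
      hp2 r hr r' hr' (by simp [RuleSat]) (by simp [RuleSat])
    obtain ⟨Γ, hA, hE, hC⟩ := leafTree ψ T T.rows hconst
    have hle : psid ψ.ψ T ≤ Γ.cost ψ.ψ [] := Nat.sInf_le ⟨Γ, ⟨hA, hE⟩, rfl⟩
    rw [hC [], psi_nil] at hle
    exact Nat.le_zero.mp hle
  · intro hM1
    have hN : T.N = T.rows.card := rfl
    have hN2 : 2 ≤ T.N := by
      by_contra hNlt
      push_neg at hNlt
      have hconst : ∀ r ∈ T.rows, ∀ r' ∈ T.rows, T.dec r = T.dec r' := by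
        intro r hr r' hr'
        rw [Finset.card_le_one.mp (by omega : T.rows.card ≤ 1) r hr r' hr']
      have hzero : ∀ δ : ℕ → Fin (k+2), Mpsirow ψ T δ = 0 := by
        intro δ
        have := Mpsirow_le_of_mem ψ T δ (p := []) (by simp)
          (fun r hr r' hr' _ _ => hconst r hr r' hr')
        rw [List.map_nil, psi_nil] at this
        exact Nat.le_zero.mp this
      have : Mpsi ψ T = 0 := Nat.le_zero.mp (csSup_le hMne
        (by rintro m ⟨δ, _, rfl⟩; exact (hzero δ).le))
      omega
    have hnat : psid ψ.ψ T ≤ Mpsi ψ T * Nat.log 2 T.N := by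
      have hmem : DT.cost ψ.ψ Γ₀ [] ∈ {m | ∃ Γ : DT k, IsDT T Γ ∧ Γ.cost ψ.ψ [] = m} :=
        ⟨Γ₀, ⟨hA₀, hE₀⟩, rfl⟩
      refine (Nat.sInf_le hmem).trans ?_
      have := hC₀ []
      rwa [psi_nil, Nat.zero_add] at this
    have hlog : (Nat.log 2 T.N : ℝ) ≤ Real.logb 2 (T.N : ℝ) := by
      have hpow : (2:ℕ) ^ Nat.log 2 T.N ≤ T.N := Nat.pow_log_le_self 2 (by omega)
      have h1 : Real.logb 2 ((2:ℝ) ^ Nat.log 2 T.N) ≤ Real.logb 2 (T.N : ℝ) :=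
        Real.logb_le_logb_of_le (by norm_num) (by positivity) (by exact_mod_cast hpow)
      rwa [Real.logb_pow, Real.logb_self_eq_one (by norm_num), mul_one] at h1
    calc (psid ψ.ψ T : ℝ) ≤ (Mpsi ψ T : ℝ) * (Nat.log 2 T.N : ℝ) := by exact_mod_cast hnat
      _ ≤ _ := mul_le_mul_of_nonneg_left hlog (by positivity)
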